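/- Let 𝒞 be the class of directed graphs (structures with one binary relation E) in which every vertex has in-degree at most 1 and out-degree at most 1 and there is no directed cycle of any length (i.e., disjoint unions of oriented paths). Then for every B ∈ ℕ, an FO sentence φ with φ ∈ PSC(B) is equivalent over 𝒞 to a sentence of the form ∃x₁…∃x_B ∀y₁…∀y_n β with β quantifier-free. -/

import Mathlib

open FirstOrder Language

universe u v

namespace Stmt

variable {L : FirstOrder.Language.{u, v}}

/-- Universally quantify the last `k` bound variables of a bounded formula. -/
def allsK {n : ℕ} : (k : ℕ) → L.BoundedFormula Empty (n + k) → L.BoundedFormula Empty n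
  | 0, φ => φ
  | k + 1, φ => allsK k φ.all

/-- Existentially quantify the last `k` bound variables of a bounded formula. -/
def exsK {n : ℕ} : (k : ℕ) → L.BoundedFormula Empty (n + k) → L.BoundedFormula Empty n
  | 0, φ => φ
  | k + 1, φ => exsK k φ.ex

/-- The Σ⁰₂ sentence `∃x₁…x_B ∀y₁…y_n β` (for `β` quantifier-free). -/
def sigma2 (B n : ℕ) (β : L.BoundedFormula Empty (B + n)) : L.Sentence :=
  (allsK n β).exs

/-- The Π⁰₂ sentence `∀x₁…x_k ∃y₁…y_m β` (for `β` quantifier-free). -/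
def pi2 (k m : ℕ) (β : L.BoundedFormula Empty (k + m)) : L.Sentence :=
  (exsK m β).alls

/-- `C` is a core of the structure `M` w.r.t. `φ`: every (nonempty) substructure of `M`
whose universe contains `C` satisfies `φ`. -/
def IsCore (φ : L.Sentence) (M : Type max u v) [L.Structure M] (C : Set M) : Prop :=
  ∀ N : L.Substructure M, C ⊆ (N : Set M) → Nonempty N → ↥N ⊨ φ

/-- `φ` is preserved under substructures modulo a finite core: every model of `φ`
has a finite core w.r.t. `φ`. -/
def PSCf (φ : L.Sentence) : Prop :=
  ∀ (M : Type max u v) [L.Structure M] [Nonempty M],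
    M ⊨ φ → ∃ C : Set M, C.Finite ∧ IsCore φ M C

/-- `φ ∈ PSC(B)`: every model of `φ` has a core of size at most `B` w.r.t. `φ`. -/
def PSC (φ : L.Sentence) (B : ℕ) : Prop :=
  ∀ (M : Type max u v) [L.Structure M] [Nonempty M],
    M ⊨ φ → ∃ C : Finset M, C.card ≤ B ∧ IsCore φ M ↑C

/-- Logical equivalence of sentences: they hold in exactly the same (nonempty) structures. -/
def Equiv (φ ψ : L.Sentence) : Prop :=
  ∀ (M : Type max u v) [L.Structure M] [Nonempty M], M ⊨ φ ↔ M ⊨ ψ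

/-- The edge relation of a structure for the language with a single binary relation. -/
abbrev E (M : Type) [Language.graph.Structure M] (x y : M) : Prop :=
  Structure.RelMap Language.adj ![x, y]

/-- Membership in the class 𝒞 of directed graphs in which every vertex has in-degree at most 1
and out-degree at most 1 and there is no directed cycle of any length (i.e. disjoint unions of
oriented paths). -/
def InDirPaths (M : Type) [Language.graph.Structure M] : Prop :=
  (∀ x y z : M, E M x z → E M y z → x = y) ∧
  (∀ x y z : M, E M x y → E M x z → y = z) ∧
  ∀ (m : ℕ) (f : Fin (m + 1) → M), ¬ ∀ i, E M (f i) (f (i + 1))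

section RealizeLemmas

variable {M : Type*} [L.Structure M]

theorem realize_allsK : ∀ (k : ℕ) {n : ℕ} (φ : L.BoundedFormula Empty (n + k))
    (v : Empty → M) (xs : Fin n → M),
    (allsK k φ).Realize v xs ↔ ∀ ys : Fin k → M, φ.Realize v (Fin.append xs ys)
  | 0, n, φ, v, xs => by
    simp only [allsK]
    constructor
    · intro h ys
      have : Fin.append xs ys = xs := by
        funext i
        have h0 : (0 : ℕ) = 0 := rfl
        rw [Fin.append_right_nil xs ys rfl]
        simp
      rwa [this]
    · intro h
      have := h (fun i => i.elim0)
      rwa [Fin.append_right_nil xs _ rfl] at this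
  | k + 1, n, φ, v, xs => by
    have : allsK (k+1) φ = allsK k φ.all := rfl
    rw [this, realize_allsK k φ.all v xs]
    constructor
    · intro h ys
      have h' := h (fun i => ys i.castSucc)
      rw [BoundedFormula.realize_all] at h'
      have h'' := h' (ys (Fin.last k))
      rw [← Fin.append_snoc] at h''
      have he : Fin.snoc (fun i : Fin k => ys i.castSucc) (ys (Fin.last k)) = ys :=
        Fin.snoc_init_self ys
      rwa [he] at h''
    · intro h ys
      rw [BoundedFormula.realize_all]
      intro a
      have := h (Fin.snoc ys a)
      rwa [Fin.append_snoc] at this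

theorem realize_exsK : ∀ (k : ℕ) {n : ℕ} (φ : L.BoundedFormula Empty (n + k))
    (v : Empty → M) (xs : Fin n → M),
    (exsK k φ).Realize v xs ↔ ∃ ys : Fin k → M, φ.Realize v (Fin.append xs ys)
  | 0, n, φ, v, xs => by
    simp only [exsK]
    constructor
    · intro h
      exact ⟨fun i => i.elim0, by rwa [Fin.append_right_nil xs _ rfl]⟩
    · rintro ⟨ys, h⟩
      rwa [Fin.append_right_nil xs ys rfl] at h
  | k + 1, n, φ, v, xs => by
    have : exsK (k+1) φ = exsK k φ.ex := rfl
    rw [this, realize_exsK k φ.ex v xs]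
    constructor
    · rintro ⟨ys, h⟩
      rw [BoundedFormula.realize_ex] at h
      obtain ⟨a, ha⟩ := h
      exact ⟨Fin.snoc ys a, by rwa [Fin.append_snoc]⟩
    · rintro ⟨ys, h⟩
      refine ⟨fun i => ys i.castSucc, ?_⟩
      rw [BoundedFormula.realize_ex]
      refine ⟨ys (Fin.last k), ?_⟩
      rw [← Fin.append_snoc]
      have he : Fin.snoc (fun i : Fin k => ys i.castSucc) (ys (Fin.last k)) = ys :=
        Fin.snoc_init_self ys
      rwa [he]

theorem realize_sigma2 {B n : ℕ} (β : L.BoundedFormula Empty (B + n)) [Nonempty M] :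
    M ⊨ sigma2 B n β ↔
      ∃ xs : Fin B → M, ∀ ys : Fin n → M, β.Realize default (Fin.append xs ys) := by
  have h1 : (M ⊨ sigma2 B n β) ↔ ∃ xs : Fin B → M, (allsK n β).Realize default xs :=
    BoundedFormula.realize_exs
  rw [h1]
  exact exists_congr fun xs => realize_allsK n β default xs

end RealizeLemmas


section Packages

/-- A "package": a quantifier-free graph formula in `m` free context variables
and `n` auxiliary variables, to be quantified existentially or universally. -/
structure Pk (m : ℕ) : Type where
  n : ℕ
  f : Language.graph.Formula (Fin m ⊕ Fin n)
  qf : f.IsQF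

theorem qf_relabel {α β : Type} {φ : Language.graph.Formula α} (h : φ.IsQF) (g : α → β) :
    (φ.relabel g).IsQF :=
  BoundedFormula.IsQF.relabel h _

namespace Pk

variable {m : ℕ} {M : Type} [Language.graph.Structure M]

/-- Existential evaluation of a package. -/
def evalE (p : Pk m) (xs : Fin m → M) : Prop :=
  ∃ w : Fin p.n → M, p.f.Realize (Sum.elim xs w)

/-- Universal evaluation of a package. -/
def evalA (p : Pk m) (xs : Fin m → M) : Prop :=
  ∀ w : Fin p.n → M, p.f.Realize (Sum.elim xs w)

/-- The existential closure of a package, as a formula in the context variables. -/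
noncomputable def exf (p : Pk m) : Language.graph.Formula (Fin m) := Formula.iExs (Fin p.n) p.f

/-- The universal closure of a package, as a formula in the context variables. -/
noncomputable def allf (p : Pk m) : Language.graph.Formula (Fin m) := Formula.iAlls (Fin p.n) p.f

theorem realize_exf (p : Pk m) (xs : Fin m → M) : p.exf.Realize xs ↔ p.evalE xs := by
  unfold exf evalE
  rw [Formula.realize_iExs]

theorem realize_allf (p : Pk m) (xs : Fin m → M) : p.allf.Realize xs ↔ p.evalA xs := by
  unfold allf evalA
  rw [Formula.realize_iAlls]

/-- Negation, turning an existential package into (the data of) a universal one. -/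
def neg (p : Pk m) : Pk m := ⟨p.n, p.f.not, p.qf.not⟩

theorem evalA_neg (p : Pk m) (xs : Fin m → M) : (p.neg).evalA xs ↔ ¬ p.evalE xs := by
  unfold evalA evalE neg
  push_neg
  exact forall_congr' fun w => Formula.realize_not

/-- Conjunction of packages. -/
def and (p q : Pk m) : Pk m :=
  ⟨p.n + q.n,
    (p.f.relabel (Sum.map id (Fin.castAdd q.n))) ⊓ (q.f.relabel (Sum.map id (Fin.natAdd p.n))),
    BoundedFormula.IsQF.inf (qf_relabel p.qf _) (qf_relabel q.qf _)⟩

theorem elim_comp_castAdd {a b : ℕ} (xs : Fin m → M) (w : Fin (a + b) → M) :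
    (Sum.elim xs w) ∘ (Sum.map id (Fin.castAdd b) : Fin m ⊕ Fin a → Fin m ⊕ Fin (a + b)) =
      Sum.elim xs (w ∘ Fin.castAdd b) := by
  funext z; cases z <;> rfl

theorem elim_comp_natAdd {a b : ℕ} (xs : Fin m → M) (w : Fin (a + b) → M) :
    (Sum.elim xs w) ∘ (Sum.map id (Fin.natAdd a) : Fin m ⊕ Fin b → Fin m ⊕ Fin (a + b)) =
      Sum.elim xs (w ∘ Fin.natAdd a) := by
  funext z; cases z <;> rfl

theorem evalE_and (p q : Pk m) (xs : Fin m → M) :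
    (p.and q).evalE xs ↔ p.evalE xs ∧ q.evalE xs := by
  unfold evalE and
  constructor
  · rintro ⟨w, hw⟩
    rw [Formula.realize_inf, Formula.realize_relabel, Formula.realize_relabel,
      elim_comp_castAdd, elim_comp_natAdd] at hw
    exact ⟨⟨_, hw.1⟩, ⟨_, hw.2⟩⟩
  · rintro ⟨⟨w1, h1⟩, ⟨w2, h2⟩⟩
    refine ⟨Fin.append w1 w2, ?_⟩
    rw [Formula.realize_inf, Formula.realize_relabel, Formula.realize_relabel,
      elim_comp_castAdd, elim_comp_natAdd]
    have e1 : (Fin.append w1 w2) ∘ Fin.castAdd q.n = w1 := by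
      funext i; exact Fin.append_left w1 w2 i
    have e2 : (Fin.append w1 w2) ∘ Fin.natAdd p.n = w2 := by
      funext i; exact Fin.append_right w1 w2 i
    rw [e1, e2]
    exact ⟨h1, h2⟩

theorem evalA_and [Nonempty M] (p q : Pk m) (xs : Fin m → M) :
    (p.and q).evalA xs ↔ p.evalA xs ∧ q.evalA xs := by
  unfold evalA and
  constructor
  · intro h
    constructor
    · intro w1
      have := h (Fin.append w1 (Classical.arbitrary _))
      rw [Formula.realize_inf, Formula.realize_relabel, Formula.realize_relabel,
        elim_comp_castAdd, elim_comp_natAdd] at this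
      have e1 : (Fin.append w1 (Classical.arbitrary (Fin q.n → M))) ∘ Fin.castAdd q.n = w1 := by
        funext i; exact Fin.append_left _ _ i
      rw [e1] at this
      exact this.1
    · intro w2
      have := h (Fin.append (Classical.arbitrary _) w2)
      rw [Formula.realize_inf, Formula.realize_relabel, Formula.realize_relabel,
        elim_comp_castAdd, elim_comp_natAdd] at this
      have e2 : (Fin.append (Classical.arbitrary (Fin p.n → M)) w2) ∘ Fin.natAdd p.n = w2 := by
        funext i; exact Fin.append_right _ _ i
      rw [e2] at this
      exact this.2
  · rintro ⟨h1, h2⟩ w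
    rw [Formula.realize_inf, Formula.realize_relabel, Formula.realize_relabel,
      elim_comp_castAdd, elim_comp_natAdd]
    exact ⟨h1 _, h2 _⟩

/-- Disjunction of packages (intended for universal evaluation). -/
def or (p q : Pk m) : Pk m :=
  ⟨p.n + q.n,
    (p.f.relabel (Sum.map id (Fin.castAdd q.n))) ⊔ (q.f.relabel (Sum.map id (Fin.natAdd p.n))),
    BoundedFormula.IsQF.sup (qf_relabel p.qf _) (qf_relabel q.qf _)⟩

theorem evalA_or [Nonempty M] (p q : Pk m) (xs : Fin m → M) :
    (p.or q).evalA xs ↔ p.evalA xs ∨ q.evalA xs := by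
  unfold evalA or
  constructor
  · intro h
    by_contra hc
    push_neg at hc
    obtain ⟨w1, h1⟩ := hc.1
    obtain ⟨w2, h2⟩ := hc.2
    have := h (Fin.append w1 w2)
    rw [Formula.realize_sup, Formula.realize_relabel, Formula.realize_relabel,
      elim_comp_castAdd, elim_comp_natAdd] at this
    have e1 : (Fin.append w1 w2) ∘ Fin.castAdd q.n = w1 := by
      funext i; exact Fin.append_left _ _ i
    have e2 : (Fin.append w1 w2) ∘ Fin.natAdd p.n = w2 := by
      funext i; exact Fin.append_right _ _ i
    rw [e1, e2] at this
    exact this.elim h1 h2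
  · intro h w
    rw [Formula.realize_sup, Formula.realize_relabel, Formula.realize_relabel,
      elim_comp_castAdd, elim_comp_natAdd]
    exact h.elim (fun h1 => Or.inl (h1 _)) (fun h2 => Or.inr (h2 _))

/-- The trivially true package. -/
def verum (m : ℕ) : Pk m := ⟨0, ⊤, BoundedFormula.IsQF.top⟩

theorem evalE_verum (xs : Fin m → M) : (verum m).evalE xs := by
  exact ⟨fun i => i.elim0, by simp [verum, Formula.Realize]⟩

theorem evalA_verum (xs : Fin m → M) : (verum m).evalA xs := by
  intro w; simp [verum, Formula.Realize]

/-- The trivially false package. -/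
def falsum (m : ℕ) : Pk m := ⟨0, ⊥, BoundedFormula.isQF_bot⟩

theorem evalA_falsum (xs : Fin m → M) : ¬ (falsum m).evalA xs := by
  intro h
  have := h (fun i => i.elim0)
  simp [falsum, Formula.Realize] at this

theorem evalE_falsum (xs : Fin m → M) : ¬ (falsum m).evalE xs := by
  rintro ⟨w, hw⟩
  simp [falsum, Formula.Realize] at hw

/-- Finite conjunction of a list of packages. -/
def bigAnd : List (Pk m) → Pk m
  | [] => verum m
  | p :: l => p.and (bigAnd l)

theorem evalE_bigAnd (l : List (Pk m)) (xs : Fin m → M) :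
    (bigAnd l).evalE xs ↔ ∀ p ∈ l, p.evalE xs := by
  induction l with
  | nil => simpa [bigAnd] using evalE_verum xs
  | cons p l ih => simp [bigAnd, evalE_and, ih]

theorem evalA_bigAnd [Nonempty M] (l : List (Pk m)) (xs : Fin m → M) :
    (bigAnd l).evalA xs ↔ ∀ p ∈ l, p.evalA xs := by
  induction l with
  | nil => simpa [bigAnd] using evalA_verum xs
  | cons p l ih => simp [bigAnd, evalA_and, ih]

/-- Finite disjunction of a list of packages. -/
def bigOr : List (Pk m) → Pk m
  | [] => falsum m
  | p :: l => p.or (bigOr l)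

theorem evalA_bigOr [Nonempty M] (l : List (Pk m)) (xs : Fin m → M) :
    (bigOr l).evalA xs ↔ ∃ p ∈ l, p.evalA xs := by
  induction l with
  | nil => simpa [bigOr] using evalA_falsum xs
  | cons p l ih => simp [bigOr, evalA_or, ih]

end Pk

end Packages
namespace Pk

variable {m : ℕ} {M : Type} [Language.graph.Structure M]

/-- Fold the last context variable of a package into its existential block. -/
def snocFold (p : Pk (m + 1)) : Pk m :=
  ⟨p.n + 1,
    p.f.relabel
      (Sum.elim
        (fun i : Fin (m + 1) =>
          if h : (i : ℕ) < m then Sum.inl ⟨(i : ℕ), h⟩ else Sum.inr (Fin.last p.n))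
        (fun j : Fin p.n => Sum.inr j.castSucc)),
    qf_relabel p.qf _⟩

theorem evalE_snocFold (p : Pk (m + 1)) (xs : Fin m → M) :
    (p.snocFold).evalE xs ↔ ∃ a : M, p.evalE (Fin.snoc xs a) := by
  unfold evalE snocFold
  constructor
  · rintro ⟨w, hw⟩
    rw [Formula.realize_relabel] at hw
    refine ⟨w (Fin.last p.n), ⟨w ∘ Fin.castSucc, ?_⟩⟩
    convert hw using 1
    funext z
    cases z with
    | inl i =>
      simp only [Function.comp_apply, Sum.elim_inl]
      by_cases h : (i : ℕ) < m
      · rw [dif_pos h]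
        simp only [Sum.elim_inl]
        simp [Fin.snoc, h]
        try rfl
      · rw [dif_neg h]
        simp only [Sum.elim_inr]
        simp [Fin.snoc, h]
        try rfl
    | inr j => simp
  · rintro ⟨a, w, hw⟩
    refine ⟨Fin.snoc w a, ?_⟩
    rw [Formula.realize_relabel]
    convert hw using 1
    funext z
    cases z with
    | inl i =>
      simp only [Function.comp_apply, Sum.elim_inl]
      by_cases h : (i : ℕ) < m
      · rw [dif_pos h]
        simp only [Sum.elim_inl]
        simp [Fin.snoc, h]
        try rfl
      · rw [dif_neg h]
        simp only [Sum.elim_inr, Fin.snoc_last]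
        simp [Fin.snoc, h]
        try rfl
    | inr j => simp [Fin.snoc_castSucc]

/-- Conversion of a formula over `Fin a ⊕ Fin b` into a bounded formula in `a + b`
bound variables. -/
def toBF {a b : ℕ} (f0 : Language.graph.Formula (Fin a ⊕ Fin b)) :
    Language.graph.BoundedFormula Empty (a + b) :=
  BoundedFormula.relabel
    (Sum.elim (fun i : Fin a => Sum.inr (Fin.castAdd b i))
      (fun j : Fin b => Sum.inr (Fin.natAdd a j))) f0

theorem isQF_toBF {a b : ℕ} {f0 : Language.graph.Formula (Fin a ⊕ Fin b)} (h : f0.IsQF) :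
    (toBF f0).IsQF :=
  BoundedFormula.IsQF.relabel h _

theorem realize_toBF {a b : ℕ} (f0 : Language.graph.Formula (Fin a ⊕ Fin b))
    (v : Empty → M) (xs : Fin a → M) (ys : Fin b → M) :
    (toBF f0).Realize v (Fin.append xs ys) ↔ f0.Realize (Sum.elim xs ys) := by
  unfold toBF
  rw [BoundedFormula.realize_relabel]
  have h1 : (Sum.elim v ((Fin.append xs ys) ∘ Fin.castAdd 0) ∘
      (Sum.elim (fun i : Fin a => Sum.inr (Fin.castAdd b i))
        (fun j : Fin b => Sum.inr (Fin.natAdd a j)))) = Sum.elim xs ys := by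
    funext z
    cases z with
    | inl i =>
      simp only [Function.comp_apply, Sum.elim_inl, Sum.elim_inr]
      have : (Fin.castAdd 0 (Fin.castAdd b i)) = Fin.castAdd b i := by ext; rfl
      rw [this, Fin.append_left]
    | inr j =>
      simp only [Function.comp_apply, Sum.elim_inr]
      have : (Fin.castAdd 0 (Fin.natAdd a j)) = Fin.natAdd a j := by ext; rfl
      rw [this, Fin.append_right]
  rw [h1]
  rw [show ((Fin.append xs ys) ∘ Fin.natAdd (a + b) : Fin 0 → M) = default from
    Subsingleton.elim _ _]
  rfl

/-- The Σ₂ sentence `∃ x₁ … x_B, evalA u` associated to a package `u` over context `B`. -/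
def sigma {B : ℕ} (u : Pk B) : Language.graph.Sentence :=
  sigma2 B u.n (toBF u.f)

theorem realize_sigma {B : ℕ} (u : Pk B) [Nonempty M] :
    M ⊨ u.sigma ↔ ∃ xs : Fin B → M, u.evalA xs := by
  unfold sigma
  rw [realize_sigma2]
  refine exists_congr fun xs => ?_
  unfold evalA
  exact forall_congr' fun ys => realize_toBF u.f default xs ys

end Pk

instance pk_nonempty (m : ℕ) : Nonempty (Pk m) := ⟨Pk.verum m⟩

section Countability

instance : ∀ l, Countable (Language.graph.Relations l) := fun _ =>
  Subsingleton.to_countable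

instance countable_sigma_bf (α : Type) [Countable α] :
    Countable (Σ k, Language.graph.BoundedFormula α k) := by
  rw [← Cardinal.mk_le_aleph0_iff]
  refine le_trans (BoundedFormula.card_le) ?_
  have h1 : Cardinal.lift.{0} (Cardinal.mk α) ≤ Cardinal.aleph0 := by
    rw [Cardinal.lift_id]
    exact Cardinal.mk_le_aleph0
  have h2 : Cardinal.lift.{0} (Language.graph.card) ≤ Cardinal.aleph0 := by
    rw [Cardinal.lift_id]
    exact Cardinal.mk_le_aleph0
  refine max_le le_rfl (le_trans (add_le_add h1 h2) ?_)
  simp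

instance countable_formula (α : Type) [Countable α] :
    Countable (Language.graph.Formula α) :=
  Function.Injective.countable
    (f := @Sigma.mk ℕ (fun k => Language.graph.BoundedFormula α k) 0)
    sigma_mk_injective

instance countable_pk (m : ℕ) : Countable (Pk m) := by
  refine Function.Injective.countable
    (f := fun p : Pk m => (⟨p.n, p.f⟩ : Σ n, Language.graph.Formula (Fin m ⊕ Fin n))) ?_
  rintro ⟨n₁, f₁, q₁⟩ ⟨n₂, f₂, q₂⟩ h
  have h1 : n₁ = n₂ := congrArg Sigma.fst h
  subst h1
  have h2 : f₁ = f₂ := eq_of_heq (Sigma.ext_iff.mp h).2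
  subst h2
  rfl

end Countability
section Ultra

open Filter

/-- The ultrapower of `M` over the hyperfilter on `ℕ`. -/
abbrev Upow (M : Type) : Type := ((Filter.hyperfilter ℕ : Ultrafilter ℕ) : Filter ℕ).Product
  (fun _ : ℕ => M)

variable {M : Type} [Language.graph.Structure M]

theorem upow_sentence [Nonempty M] (ψ : Language.graph.Sentence) :
    Upow M ⊨ ψ ↔ M ⊨ ψ := by
  rw [Ultraproduct.sentence_realize]
  exact eventually_const

theorem mem_hyper_of_le (j : ℕ) :
    {i : ℕ | j ≤ i} ∈ (Filter.hyperfilter ℕ : Ultrafilter ℕ) := by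
  have h1 : {i : ℕ | j ≤ i}ᶜ.Finite := by
    apply Set.Finite.subset (Set.finite_Iio j)
    intro i hi
    simp only [Set.mem_compl_iff, Set.mem_setOf_eq, not_le] at hi
    exact hi
  exact Filter.hyperfilter_le_cofinite (Filter.mem_cofinite.mpr h1)

theorem realize_zero_arg {α : Type} (φ : Language.graph.Formula α) {N : Type}
    [Language.graph.Structure N] (v : α → N) (xs : Fin 0 → N) :
    BoundedFormula.Realize φ v xs ↔ φ.Realize v := by
  unfold Formula.Realize
  rw [Subsingleton.elim xs default]

theorem coe_snoc_eq {m : ℕ} (pr : Fin m → (ℕ → M)) (g : ℕ → M) :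
    (fun k => (((Fin.snoc (α := fun _ => ℕ → M) pr g k) : ℕ → M) : Upow M)) =
      Fin.snoc (fun k => ((pr k : ℕ → M) : Upow M)) ((g : ℕ → M) : Upow M) := by
  rw [show (fun k => (((Fin.snoc (α := fun _ => ℕ → M) pr g k) : ℕ → M) : Upow M)) =
    (fun h : ℕ → M => (h : Upow M)) ∘ (Fin.snoc pr g) from rfl, Fin.comp_snoc]
  rfl

theorem snoc_apply_comm {m : ℕ} (pr : Fin m → (ℕ → M)) (g : ℕ → M) (i : ℕ) :
    (fun k => (Fin.snoc (α := fun _ => ℕ → M) pr g k) i) =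
      Fin.snoc (α := fun _ => M) (fun k' => pr k' i) (g i) := by
  funext k
  by_cases h : (k : ℕ) < m <;> simp [Fin.snoc, h]

/-- Łoś's theorem for the existential closure of a package. -/
theorem los_exf [Nonempty M] {m : ℕ} (p : Pk m) (g : Fin m → ℕ → M) :
    (p.exf).Realize (fun k => ((g k : ℕ → M) : Upow M)) ↔
      ∀ᶠ i in (Filter.hyperfilter ℕ : Ultrafilter ℕ), (p.exf).Realize (fun k => g k i) := by
  have h0 := Ultraproduct.boundedFormula_realize_cast (u := Filter.hyperfilter ℕ)
    (φ := (p.exf : Language.graph.BoundedFormula (Fin m) 0)) (x := g)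
    (v := fun i : Fin 0 => (i.elim0 : ℕ → M))
  simp only [realize_zero_arg] at h0
  exact h0

/-- Łoś's theorem for the universal closure of a package. -/
theorem los_allf [Nonempty M] {m : ℕ} (p : Pk m) (g : Fin m → ℕ → M) :
    (p.allf).Realize (fun k => ((g k : ℕ → M) : Upow M)) ↔
      ∀ᶠ i in (Filter.hyperfilter ℕ : Ultrafilter ℕ), (p.allf).Realize (fun k => g k i) := by
  have h0 := Ultraproduct.boundedFormula_realize_cast (u := Filter.hyperfilter ℕ)
    (φ := (p.allf : Language.graph.BoundedFormula (Fin m) 0)) (x := g)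
    (v := fun i : Fin 0 => (i.elim0 : ℕ → M))
  simp only [realize_zero_arg] at h0
  exact h0

/-- Countable saturation of the ultrapower: a countable chain-satisfiable family of
existential packages over parameters is jointly realizable. -/
theorem upow_saturation [Nonempty M] {m : ℕ} (p : Fin m → Upow M) (q : ℕ → Pk (m + 1))
    (hfin : ∀ j : ℕ, ∃ y : Upow M, ∀ j' ≤ j, (q j').evalE (Fin.snoc p y)) :
    ∃ y : Upow M, ∀ j : ℕ, (q j).evalE (Fin.snoc p y) := by
  classical
  have hrep : ∀ i : Fin m, ∃ f : ℕ → M, (f : Upow M) = p i := fun i => Quotient.exists_rep (p i)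
  choose pr hpr using hrep
  have hpr' : (fun k => ((pr k : ℕ → M) : Upow M)) = p := funext hpr
  set χ : ℕ → Pk (m + 1) := fun j => Pk.bigAnd ((List.range (j + 1)).map q) with hχ
  set D : ℕ → Pk m := fun j => (χ j).snocFold with hD
  set A : ℕ → Set ℕ := fun j => {i : ℕ | ((D j).exf).Realize (fun k => pr k i)} with hA
  have hAj : ∀ j, A j ∈ (Filter.hyperfilter ℕ : Ultrafilter ℕ) := by
    intro j
    have h1 : ((D j).exf).Realize (fun k => ((pr k : ℕ → M) : Upow M)) := by
      rw [Pk.realize_exf, hpr']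
      rw [show D j = (χ j).snocFold from rfl]
      refine (Pk.evalE_snocFold (M := Upow M) _ _).2 ?_
      obtain ⟨y, hy⟩ := hfin j
      refine ⟨y, ?_⟩
      rw [show χ j = Pk.bigAnd ((List.range (j + 1)).map q) from rfl, Pk.evalE_bigAnd]
      rintro p' hp'
      obtain ⟨j', hj', rfl⟩ := List.mem_map.1 hp'
      exact hy j' (Nat.lt_succ_iff.1 (List.mem_range.1 hj'))
    exact (los_exf (D j) pr).1 h1
  set jmax : ℕ → ℕ := fun i => Nat.findGreatest (fun j => i ∈ A j) i with hjmax
  have hgex : ∀ i : ℕ, i ∈ A (jmax i) →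
      ∃ y : M, (χ (jmax i)).evalE (Fin.snoc (fun k => pr k i) y) := by
    intro i hi
    have h2 := (Pk.realize_exf _ _).1 hi
    rwa [show D (jmax i) = (χ (jmax i)).snocFold from rfl, Pk.evalE_snocFold] at h2
  set g : ℕ → M := fun i =>
    if hi : i ∈ A (jmax i) then Classical.choose (hgex i hi) else Classical.arbitrary M with hg
  refine ⟨((g : ℕ → M) : Upow M), ?_⟩
  intro j
  have hsub : A j ∩ {i : ℕ | j ≤ i} ⊆
      {i : ℕ | ((q j).exf).Realize (fun k => (Fin.snoc (α := fun _ => ℕ → M) pr g k) i)} := by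
    rintro i ⟨hiA, hij⟩
    have hij' : j ≤ i := hij
    have hjm : j ≤ jmax i := Nat.le_findGreatest hij' hiA
    have hiAj : i ∈ A (jmax i) := Nat.findGreatest_spec (P := fun j' => i ∈ A j') hij' hiA
    have hval : (χ (jmax i)).evalE (Fin.snoc (fun k => pr k i) (g i)) := by
      rw [show g i = Classical.choose (hgex i hiAj) from dif_pos hiAj]
      exact Classical.choose_spec (hgex i hiAj)
    rw [show χ (jmax i) = Pk.bigAnd ((List.range (jmax i + 1)).map q) from rfl,
      Pk.evalE_bigAnd] at hval
    have hqj : (q j).evalE (Fin.snoc (fun k => pr k i) (g i)) :=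
      hval (q j) (List.mem_map.2 ⟨j, List.mem_range.2 (Nat.lt_succ_of_le hjm), rfl⟩)
    show ((q j).exf).Realize _
    rw [Pk.realize_exf, snoc_apply_comm]
    exact hqj
  have hmem : {i : ℕ | ((q j).exf).Realize
      (fun k => (Fin.snoc (α := fun _ => ℕ → M) pr g k) i)} ∈
      (Filter.hyperfilter ℕ : Ultrafilter ℕ) :=
    Filter.mem_of_superset (Filter.inter_mem (hAj j) (mem_hyper_of_le j)) hsub
  have hfinal := (los_exf (q j) (Fin.snoc pr g)).2 hmem
  rw [coe_snoc_eq, hpr'] at hfinal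
  exact (Pk.realize_exf _ _).1 hfinal

end Ultra
section AtomicPackages

open Structure

/-- Equality package. -/
def eqPk (m : ℕ) (i j : Fin m) : Pk m :=
  ⟨0, Term.equal (Term.var (Sum.inl i)) (Term.var (Sum.inl j)),
    (BoundedFormula.IsAtomic.equal _ _).isQF⟩

/-- Disequality package. -/
def neqPk (m : ℕ) (i j : Fin m) : Pk m :=
  ⟨0, (Term.equal (Term.var (Sum.inl i)) (Term.var (Sum.inl j))).not,
    ((BoundedFormula.IsAtomic.equal _ _).isQF).not⟩

/-- Adjacency package. -/
def relPk (m : ℕ) (i j : Fin m) : Pk m :=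
  ⟨0, adj.formula₂ (Term.var (Sum.inl i)) (Term.var (Sum.inl j)),
    (BoundedFormula.IsAtomic.rel _ _).isQF⟩

/-- Non-adjacency package. -/
def nrelPk (m : ℕ) (i j : Fin m) : Pk m :=
  ⟨0, (adj.formula₂ (Term.var (Sum.inl i)) (Term.var (Sum.inl j))).not,
    ((BoundedFormula.IsAtomic.rel _ _).isQF).not⟩

variable {N : Type} [Language.graph.Structure N]

theorem evalE_eqPk {m : ℕ} (i j : Fin m) (xs : Fin m → N) :
    (eqPk m i j).evalE xs ↔ xs i = xs j := by
  unfold Pk.evalE eqPk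
  constructor
  · rintro ⟨w, hw⟩
    rw [Formula.realize_equal] at hw
    simpa [Term.realize] using hw
  · intro h
    exact ⟨fun k => k.elim0, by rw [Formula.realize_equal]; simpa [Term.realize] using h⟩

theorem evalE_neqPk {m : ℕ} (i j : Fin m) (xs : Fin m → N) :
    (neqPk m i j).evalE xs ↔ xs i ≠ xs j := by
  unfold Pk.evalE neqPk
  constructor
  · rintro ⟨w, hw⟩
    rw [Formula.realize_not, Formula.realize_equal] at hw
    simpa [Term.realize] using hw
  · intro h
    exact ⟨fun k => k.elim0, by
      rw [Formula.realize_not, Formula.realize_equal]; simpa [Term.realize] using h⟩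

theorem evalE_relPk {m : ℕ} (i j : Fin m) (xs : Fin m → N) :
    (relPk m i j).evalE xs ↔ RelMap (L := Language.graph) adj ![xs i, xs j] := by
  unfold Pk.evalE relPk
  constructor
  · rintro ⟨w, hw⟩
    rw [Formula.realize_rel₂] at hw
    simpa [Term.realize] using hw
  · intro h
    exact ⟨fun k => k.elim0, by rw [Formula.realize_rel₂]; simpa [Term.realize] using h⟩

theorem evalE_nrelPk {m : ℕ} (i j : Fin m) (xs : Fin m → N) :
    (nrelPk m i j).evalE xs ↔ ¬ RelMap (L := Language.graph) adj ![xs i, xs j] := by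
  unfold Pk.evalE nrelPk
  constructor
  · rintro ⟨w, hw⟩
    rw [Formula.realize_not, Formula.realize_rel₂] at hw
    simpa [Term.realize] using hw
  · intro h
    exact ⟨fun k => k.elim0, by
      rw [Formula.realize_not, Formula.realize_rel₂]; simpa [Term.realize] using h⟩

end AtomicPackages

section Embed

open Structure

variable {M : Type} [Language.graph.Structure M] [Nonempty M]

/-- An inductive chain construction. -/
noncomputable def chainRec {X : Type} (P : (m : ℕ) → (Fin m → X) → Prop) (B : ℕ)
    (F0 : Fin B → X) (h0 : P B F0)
    (hstep : ∀ m (F : Fin m → X), P m F → ∃ y, P (m + 1) (Fin.snoc F y)) :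
    (k : ℕ) → {F : Fin (B + k) → X // P (B + k) F}
  | 0 => ⟨F0, h0⟩
  | k + 1 =>
    ⟨Fin.snoc (chainRec P B F0 h0 hstep k).1
        (Classical.choose (hstep _ _ (chainRec P B F0 h0 hstep k).2)),
      Classical.choose_spec (hstep _ _ (chainRec P B F0 h0 hstep k).2)⟩

theorem chainRec_succ {X : Type} (P : (m : ℕ) → (Fin m → X) → Prop) (B : ℕ)
    (F0 : Fin B → X) (h0 : P B F0)
    (hstep : ∀ m (F : Fin m → X), P m F → ∃ y, P (m + 1) (Fin.snoc F y)) (k : ℕ) :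
    (chainRec P B F0 h0 hstep (k + 1)).1 =
      Fin.snoc (chainRec P B F0 h0 hstep k).1
        (Classical.choose (hstep _ _ (chainRec P B F0 h0 hstep k).2)) := by
  simp [chainRec]

theorem chainRec_zero {X : Type} (P : (m : ℕ) → (Fin m → X) → Prop) (B : ℕ)
    (F0 : Fin B → X) (h0 : P B F0)
    (hstep : ∀ m (F : Fin m → X), P m F → ∃ y, P (m + 1) (Fin.snoc F y)) :
    (chainRec P B F0 h0 hstep 0).1 = F0 := by
  simp [chainRec]

/-- Key embedding lemma: a countable structure whose existential type (at a tuple) is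
dominated by the existential type of a tuple in an ultrapower embeds into the ultrapower. -/
theorem embed_into_upow {V : Type} [Language.graph.Structure V] [Countable V] [Nonempty V]
    {B : ℕ} (abar : Fin B → V) (cbar : Fin B → Upow M)
    (hincl : ∀ p : Pk B, p.evalE abar → p.evalE cbar) :
    ∃ g : V → Upow M,
      (∀ i, g (abar i) = cbar i) ∧ Function.Injective g ∧
      (∀ x y : V, RelMap (L := Language.graph) adj ![x, y] ↔
        RelMap (L := Language.graph) adj ![g x, g y]) := by
  classical
  obtain ⟨v₀, hv₀⟩ := exists_surjective_nat V
  set v : ℕ → V := fun i => if h : i < B then abar ⟨i, h⟩ else v₀ (i - B) with hv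
  have hvsurj : Function.Surjective v := by
    intro x
    obtain ⟨j, hj⟩ := hv₀ x
    refine ⟨B + j, ?_⟩
    rw [hv]
    simp only [Nat.add_sub_cancel_left, dif_neg (by omega : ¬ B + j < B)]
    exact hj
  have hvB : ∀ i : Fin B, v (i : ℕ) = abar i := by
    intro i
    rw [hv]
    simp only [dif_pos i.isLt]
  -- the invariant
  set Inv : (m : ℕ) → (Fin m → Upow M) → Prop :=
    fun m F => ∀ p : Pk m, p.evalE (fun k : Fin m => v (k : ℕ)) → p.evalE F with hInv
  -- base case
  have hbase : Inv B cbar := by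
    intro p hp
    refine hincl p ?_
    have : (fun k : Fin B => v (k : ℕ)) = abar := funext fun k => hvB k
    rwa [this] at hp
  -- the snoc decomposition of prefix tuples
  have hvsnoc : ∀ m : ℕ, (fun k : Fin (m + 1) => v (k : ℕ)) =
      Fin.snoc (fun k : Fin m => v (k : ℕ)) (v m) := by
    intro m
    funext k
    by_cases h : (k : ℕ) < m
    · simp [Fin.snoc, h]
    · simp only [Fin.snoc, h, dif_neg, not_false_iff, cast_eq]
      have hkm : (k : ℕ) = m := by omega
      rw [hkm]
  -- the inductive step
  have hstep : ∀ (m : ℕ) (F : Fin m → Upow M), Inv m F →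
      ∃ y : Upow M, Inv (m + 1) (Fin.snoc F y) := by
    intro m F hF
    obtain ⟨e, he⟩ := exists_surjective_nat (Pk (m + 1))
    set q : ℕ → Pk (m + 1) := fun j =>
      if (e j).evalE (fun k : Fin (m + 1) => v (k : ℕ)) then e j else Pk.verum (m + 1) with hq
    have hqv : ∀ j, (q j).evalE (fun k : Fin (m + 1) => v (k : ℕ)) := by
      intro j
      by_cases h : (e j).evalE (fun k : Fin (m + 1) => v (k : ℕ))
      · have hqe : q j = e j := by simp only [hq]; rw [if_pos h]
        rwa [hqe]
      · have hqe : q j = Pk.verum (m + 1) := by simp only [hq]; rw [if_neg h]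
        rw [hqe]
        exact Pk.evalE_verum _
    have hfin : ∀ j : ℕ, ∃ y : Upow M, ∀ j' ≤ j, (q j').evalE (Fin.snoc F y) := by
      intro j
      set χ : Pk (m + 1) := Pk.bigAnd ((List.range (j + 1)).map q) with hχ
      have hχv : χ.evalE (fun k : Fin (m + 1) => v (k : ℕ)) := by
        rw [hχ, Pk.evalE_bigAnd]
        rintro p' hp'
        obtain ⟨j', _, rfl⟩ := List.mem_map.1 hp'
        exact hqv j'
      have hD : (χ.snocFold).evalE (fun k : Fin m => v (k : ℕ)) := by
        rw [Pk.evalE_snocFold]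
        exact ⟨v m, by rwa [← hvsnoc m]⟩
      have hDF := hF χ.snocFold hD
      rw [Pk.evalE_snocFold] at hDF
      obtain ⟨y, hy⟩ := hDF
      refine ⟨y, ?_⟩
      intro j' hj'
      rw [hχ, Pk.evalE_bigAnd] at hy
      exact hy (q j') (List.mem_map.2 ⟨j', List.mem_range.2 (Nat.lt_succ_of_le hj'), rfl⟩)
    obtain ⟨y, hy⟩ := upow_saturation F q hfin
    refine ⟨y, ?_⟩
    intro p hp
    obtain ⟨j, rfl⟩ := he p
    have hqe : q j = e j := by simp only [hq]; rw [if_pos hp]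
    rw [← hqe]
    exact hy j
  -- the chain and the limit function
  have hmain : ∃ Fh : ℕ → Upow M,
      (∀ i : Fin B, Fh (i : ℕ) = cbar i) ∧
      (∀ k : ℕ, Inv (B + k) (fun i : Fin (B + k) => Fh (i : ℕ))) := by
    set chain : (k : ℕ) → {F : Fin (B + k) → Upow M // Inv (B + k) F} :=
      chainRec Inv B cbar hbase (fun m F hF => hstep m F hF) with hchaindef
    have hcomp : ∀ (k : ℕ) (i : Fin (B + k)),
        (chain (k + 1)).1 (Fin.castSucc i) = (chain k).1 i := by
      intro k i
      rw [hchaindef, chainRec_succ]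
      exact Fin.snoc_castSucc _ _ _
    have hcoh : ∀ (k k' : ℕ) (h : k ≤ k') (i : Fin (B + k)),
        (chain k').1 (Fin.castLE (Nat.add_le_add_left h B) i) = (chain k).1 i := by
      intro k k' h
      induction k', h using Nat.le_induction with
      | base =>
        intro i
        exact congrArg _ (Fin.ext rfl)
      | succ k' hkk' ih =>
        intro i
        have e1 : (Fin.castLE (Nat.add_le_add_left (Nat.le_succ_of_le hkk') B) i :
            Fin (B + (k' + 1))) =
            Fin.castSucc (Fin.castLE (Nat.add_le_add_left hkk' B) i) := Fin.ext rfl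
        calc (chain (k' + 1)).1 (Fin.castLE (Nat.add_le_add_left (Nat.le_succ_of_le hkk') B) i)
            = (chain (k' + 1)).1 (Fin.castSucc (Fin.castLE (Nat.add_le_add_left hkk' B) i)) := by
              rw [e1]
          _ = (chain k').1 (Fin.castLE (Nat.add_le_add_left hkk' B) i) := hcomp _ _
          _ = (chain k).1 i := ih i
    refine ⟨fun a => (chain (a + 1)).1 ⟨a, by omega⟩, ?_, ?_⟩
    · intro i
      have h1 := hcoh 0 ((i : ℕ) + 1) (Nat.zero_le _) i
      have h2 : (Fin.castLE (Nat.add_le_add_left (Nat.zero_le _) B) i) =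
          (⟨(i : ℕ), by omega⟩ : Fin (B + ((i : ℕ) + 1))) := Fin.ext rfl
      rw [h2] at h1
      rw [hchaindef, chainRec_zero] at h1
      exact h1
    · intro k
      have he : (fun i : Fin (B + k) => (chain ((i : ℕ) + 1)).1 ⟨(i : ℕ), by omega⟩) =
          (chain k).1 := by
        funext i
        rcases le_or_gt ((i : ℕ) + 1) k with h | h
        · have h1 := hcoh ((i : ℕ) + 1) k h ⟨(i : ℕ), by omega⟩
          have h2 : (Fin.castLE (Nat.add_le_add_left h B)
              (⟨(i : ℕ), by omega⟩ : Fin (B + ((i : ℕ) + 1)))) = i := Fin.ext rfl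
          rw [h2] at h1
          exact h1.symm
        · have hkk : k ≤ (i : ℕ) + 1 := by omega
          have h1 := hcoh k ((i : ℕ) + 1) hkk i
          have h2 : (Fin.castLE (Nat.add_le_add_left hkk B) i) =
              (⟨(i : ℕ), by omega⟩ : Fin (B + ((i : ℕ) + 1))) := Fin.ext rfl
          rw [h2] at h1
          exact h1
      rw [he]
      exact (chain k).2
  obtain ⟨Fh, hFhB, hFhInv⟩ := hmain
  have key : ∀ (k : ℕ) (p : Pk (B + k)),
      p.evalE (fun i : Fin (B + k) => v (i : ℕ)) → p.evalE (fun i : Fin (B + k) => Fh (i : ℕ)) :=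
    fun k => hFhInv k
  -- index choice
  choose idx hidx using hvsurj
  -- transfer of atomic facts
  have trans_eq : ∀ a b : ℕ, v a = v b → Fh a = Fh b := by
    intro a b hab
    have hk : a < B + (a + b + 1) := by omega
    have hk' : b < B + (a + b + 1) := by omega
    have h1 := key (a + b + 1) (eqPk _ ⟨a, hk⟩ ⟨b, hk'⟩)
      ((evalE_eqPk _ _ _).2 hab)
    exact (evalE_eqPk _ _ _).1 h1
  have trans_ne : ∀ a b : ℕ, v a ≠ v b → Fh a ≠ Fh b := by
    intro a b hab
    have hk : a < B + (a + b + 1) := by omega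
    have hk' : b < B + (a + b + 1) := by omega
    have h1 := key (a + b + 1) (neqPk _ ⟨a, hk⟩ ⟨b, hk'⟩)
      ((evalE_neqPk _ _ _).2 hab)
    exact (evalE_neqPk _ _ _).1 h1
  have trans_rel : ∀ a b : ℕ,
      (RelMap (L := Language.graph) adj ![v a, v b] ↔
        RelMap (L := Language.graph) adj ![Fh a, Fh b]) := by
    intro a b
    have hk : a < B + (a + b + 1) := by omega
    have hk' : b < B + (a + b + 1) := by omega
    constructor
    · intro hab
      have h1 := key (a + b + 1) (relPk _ ⟨a, hk⟩ ⟨b, hk'⟩)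
        ((evalE_relPk _ _ _).2 hab)
      exact (evalE_relPk _ _ _).1 h1
    · intro hab
      by_contra hc
      have h1 := key (a + b + 1) (nrelPk _ ⟨a, hk⟩ ⟨b, hk'⟩)
        ((evalE_nrelPk _ _ _).2 hc)
      exact (evalE_nrelPk _ _ _).1 h1 hab
  refine ⟨fun x => Fh (idx x), ?_, ?_, ?_⟩
  · intro i
    show Fh (idx (abar i)) = cbar i
    have h1 : v (idx (abar i)) = v (i : ℕ) := by rw [hidx, hvB]
    have h2 := trans_eq _ _ h1
    rw [h2, hFhB]
  · intro x y hxy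
    by_contra hne
    have h1 : v (idx x) ≠ v (idx y) := by
      rw [hidx, hidx]
      exact hne
    exact trans_ne _ _ h1 hxy
  · intro x y
    have h1 := trans_rel (idx x) (idx y)
    rw [hidx, hidx] at h1
    exact h1

end Embed
section FamilyLos

open Filter

variable {Vs : ℕ → Type} [∀ j, Language.graph.Structure (Vs j)] [∀ j, Nonempty (Vs j)]

/-- The ultraproduct of a family over the hyperfilter. -/
abbrev UProd (Vs : ℕ → Type) [∀ j, Language.graph.Structure (Vs j)] : Type :=
  ((Filter.hyperfilter ℕ : Ultrafilter ℕ) : Filter ℕ).Product Vs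

theorem los_allf_fam {m : ℕ} (p : Pk m) (g : Fin m → (∀ j, Vs j)) :
    (p.allf).Realize (fun k => ((g k : ∀ j, Vs j) : UProd Vs)) ↔
      ∀ᶠ j in (Filter.hyperfilter ℕ : Ultrafilter ℕ), (p.allf).Realize (fun k => g k j) := by
  have h0 := Ultraproduct.boundedFormula_realize_cast (u := Filter.hyperfilter ℕ)
    (φ := (p.allf : Language.graph.BoundedFormula (Fin m) 0)) (x := g)
    (v := fun i : Fin 0 => (i.elim0 : ∀ j, Vs j))
  simp only [realize_zero_arg] at h0
  exact h0

theorem uprod_sentence_not (ψ : Language.graph.Sentence)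
    (hψ : ∀ j, ¬ (Vs j ⊨ ψ)) : ¬ (UProd Vs ⊨ ψ) := by
  rw [Ultraproduct.sentence_realize]
  intro hc
  obtain ⟨j, hj⟩ := hc.exists
  exact hψ j hj

end FamilyLos

section ModelBundle

/-- A bundled nonempty graph structure. -/
structure GM : Type 1 where
  W : Type
  str : Language.graph.Structure W
  ne : Nonempty W

/-- Satisfaction for bundled structures. -/
def GM.Sat (G : GM) (ψ : Language.graph.Sentence) : Prop :=
  @Sentence.Realize Language.graph G.W G.str ψ

end ModelBundle

section RangeSub

open Structure

/-- The substructure on the range of a map into a graph structure. -/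
def rangeSub {V W : Type} [Language.graph.Structure W] (g : V → W) :
    Language.graph.Substructure W where
  carrier := Set.range g
  fun_mem := by
    intro n f
    exact isEmptyElim f

theorem two_tuple_eq {α : Type*} (y : Fin 2 → α) : y = ![y 0, y 1] := by
  funext k
  fin_cases k <;> rfl

/-- Transfer of sentences along an injective relation-preserving map. -/
theorem realize_range_iso {V W : Type} [Language.graph.Structure V]
    [Language.graph.Structure W] (g : V → W) (hinj : Function.Injective g)
    (hrel : ∀ x y : V, RelMap (L := Language.graph) adj ![x, y] ↔
      RelMap (L := Language.graph) adj ![g x, g y]) (ψ : Language.graph.Sentence) :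
    (↥(rangeSub g) ⊨ ψ) ↔ (V ⊨ ψ) := by
  have hequiv : V ≃[Language.graph] ↥(rangeSub g) := by
    refine ⟨Equiv.ofInjective g hinj, ?_, ?_⟩
    · intro n f
      exact isEmptyElim f
    · intro n r x
      match n, r with
      | 2, Language.graphRel.adj =>
        have hcoe : ∀ k : Fin 2, ((Equiv.ofInjective g hinj (x k) : Set.range g) : W) = g (x k) :=
          fun k => rfl
        show RelMap adj (fun k => (((Equiv.ofInjective g hinj) ∘ x) k : W)) ↔ RelMap adj x
        have h1 : (fun k : Fin 2 => (((Equiv.ofInjective g hinj) ∘ x) k : W)) = fun k => g (x k) := by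
          funext k
          rfl
        rw [h1]
        have h2 : (fun k : Fin 2 => g (x k)) = ![g (x 0), g (x 1)] := by
          rw [← two_tuple_eq (fun k : Fin 2 => g (x k))]
        rw [h2, two_tuple_eq x]
        exact (hrel (x 0) (x 1)).symm
  exact (StrongHomClass.realize_sentence hequiv ψ).symm

end RangeSub
section Cover

open Filter

instance : Countable (Language.graph.Symbols) := by
  unfold Language.Symbols
  infer_instance

theorem graph_card_le : Language.graph.card ≤ Cardinal.aleph0 := by
  have h1 : Language.graph.card = Cardinal.mk Language.graph.Symbols := rfl
  rw [h1]
  exact Cardinal.mk_le_aleph0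

/-- The covering lemma: every model of a `PSC(B)` sentence `φ` satisfies some
Σ₂ sentence (with `B` existential quantifiers) which globally implies `φ`. -/
theorem cover {B : ℕ} {φ : Language.graph.Sentence} (h : PSC φ B)
    (M : Type) [Language.graph.Structure M] [Nonempty M] (hM : M ⊨ φ) :
    ∃ u : Pk B, (M ⊨ u.sigma) ∧ ∀ G : GM, G.Sat u.sigma → G.Sat φ := by
  classical
  -- the ultrapower and its core
  have hMstar : Upow M ⊨ φ := (upow_sentence φ).2 hM
  obtain ⟨C, hCcard, hCcore⟩ := h (Upow M) hMstar
  -- a tuple covering the core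
  set c0 : Upow M := if hC : C.Nonempty then hC.choose else Classical.arbitrary _ with hc0
  set cbar : Fin B → Upow M := fun i =>
    if h : (i : ℕ) < C.toList.length then C.toList.get ⟨(i : ℕ), h⟩ else c0 with hcbar
  have hCsub : (C : Set (Upow M)) ⊆ Set.range cbar := by
    intro x hx
    obtain ⟨⟨j, hj⟩, hget⟩ := List.mem_iff_get.1 (Finset.mem_toList.2 hx)
    have hjB : j < B := by
      have := C.length_toList
      omega
    refine ⟨⟨j, hjB⟩, ?_⟩
    rw [hcbar]
    simp only [dif_pos hj]
    exact hget
  by_cases hD : ∃ H : List (Pk B), (∀ p ∈ H, ¬ p.evalE cbar) ∧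
      ∀ G : GM, G.Sat (Pk.bigAnd (H.map Pk.neg)).sigma → G.Sat φ
  · obtain ⟨H, hHneg, hHimp⟩ := hD
    refine ⟨Pk.bigAnd (H.map Pk.neg), ?_, hHimp⟩
    have hup : Upow M ⊨ (Pk.bigAnd (H.map Pk.neg)).sigma := by
      rw [Pk.realize_sigma]
      refine ⟨cbar, ?_⟩
      rw [Pk.evalA_bigAnd]
      rintro p' hp'
      obtain ⟨p, hp, rfl⟩ := List.mem_map.1 hp'
      rw [Pk.evalA_neg]
      exact hHneg p hp
    exact (upow_sentence _).1 hup
  · exfalso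
    push_neg at hD
    -- enumerate the complement type
    set F : Set (Pk B) := {p : Pk B | ¬ p.evalE cbar} with hF
    have hFc : F.Countable := Set.to_countable F
    have hFne : F.Nonempty := ⟨Pk.falsum B, Pk.evalE_falsum cbar⟩
    obtain ⟨ef, hef⟩ := hFc.exists_eq_range hFne
    have hefF : ∀ j, ¬ (ef j).evalE cbar := by
      intro j
      have : ef j ∈ F := by rw [hef]; exact ⟨j, rfl⟩
      exact this
    -- counterexample models
    have hnot : ∀ j : ℕ, ∃ G : GM,
        G.Sat (Pk.bigAnd (((List.range (j + 1)).map ef).map Pk.neg)).sigma ∧ ¬ G.Sat φ := by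
      intro j
      obtain ⟨G, hG1, hG2⟩ := hD ((List.range (j + 1)).map ef) (by
        rintro p hp
        obtain ⟨j', _, rfl⟩ := List.mem_map.1 hp
        exact hefF j')
      exact ⟨G, hG1, hG2⟩
    choose Gf hGσ hGφ using hnot
    set Vs : ℕ → Type := fun j => (Gf j).W with hVs
    letI : ∀ j, Language.graph.Structure (Vs j) := fun j => (Gf j).str
    letI : ∀ j, Nonempty (Vs j) := fun j => (Gf j).ne
    -- witnesses in each counterexample
    have hwit : ∀ j : ℕ, ∃ xs : Fin B → Vs j, ∀ j' ≤ j, ¬ (ef j').evalE xs := by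
      intro j
      have h1 := hGσ j
      unfold GM.Sat at h1
      rw [Pk.realize_sigma] at h1
      obtain ⟨xs, hxs⟩ := h1
      refine ⟨xs, ?_⟩
      intro j' hj'
      rw [Pk.evalA_bigAnd] at hxs
      have := hxs ((ef j').neg) (List.mem_map.2 ⟨ef j',
        List.mem_map.2 ⟨j', List.mem_range.2 (Nat.lt_succ_of_le hj'), rfl⟩, rfl⟩)
      rwa [Pk.evalA_neg] at this
    choose xbar hxbar using hwit
    -- the ultraproduct of the counterexamples
    set abar : Fin B → UProd Vs := fun k => ((fun j => xbar j k : ∀ j, Vs j) : UProd Vs)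
      with habar
    have hVstarphi : ¬ (UProd Vs ⊨ φ) := by
      refine uprod_sentence_not φ ?_
      intro j
      exact hGφ j
    have hVstarF : ∀ p : Pk B, ¬ p.evalE cbar → ¬ p.evalE abar := by
      intro p hp
      have hpF : p ∈ F := hp
      rw [hef] at hpF
      obtain ⟨j₀, rfl⟩ := hpF
      have hev : ∀ᶠ j in (Filter.hyperfilter ℕ : Ultrafilter ℕ),
          ((ef j₀).neg).allf.Realize (fun k => xbar j k) := by
        refine Filter.mem_of_superset (mem_hyper_of_le j₀) ?_
        intro j hj
        show ((ef j₀).neg).allf.Realize (fun k => xbar j k)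
        rw [Pk.realize_allf, Pk.evalA_neg]
        exact hxbar j j₀ hj
      have h1 := (los_allf_fam ((ef j₀).neg) (fun k => fun j => xbar j k)).2 hev
      rw [Pk.realize_allf, Pk.evalA_neg] at h1
      exact h1
    -- a countable elementary submodel
    have hmain : ∃ (V : Type) (sV : Language.graph.Structure V),
        Countable V ∧ Nonempty V ∧ ∃ ab : Fin B → V,
          (¬ @Sentence.Realize _ V sV φ) ∧
          (∀ p : Pk B, @Pk.evalE B V sV p ab → p.evalE cbar) := by
      by_cases hcnt : Countable (UProd Vs)
      · refine ⟨UProd Vs, inferInstance, hcnt, inferInstance, abar, hVstarphi, ?_⟩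
        intro p hp
        by_contra hc
        exact hVstarF p hc hp
      · have hinf : Infinite (UProd Vs) := by
          by_contra hfin
          exact hcnt ((not_infinite_iff_finite.1 hfin).to_countable)
        obtain ⟨S, hsS, hScard⟩ := exists_elementarySubstructure_card_eq
          (L := Language.graph) (M := UProd Vs) (Set.range abar) Cardinal.aleph0
          le_rfl
          (by
            haveI := (Set.finite_range abar).to_subtype
            rw [Cardinal.lift_le]
            exact Cardinal.mk_le_aleph0)
          (by rw [Cardinal.lift_le]; exact graph_card_le)
          (by rw [Cardinal.lift_le]; exact Cardinal.infinite_iff.1 hinf)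
        haveI hScnt : Countable S := by
          rw [← Cardinal.mk_le_aleph0_iff]
          simp only [Cardinal.lift_id] at hScard
          exact le_of_eq hScard
        haveI hSne : Nonempty S := by
          rw [← Cardinal.mk_ne_zero_iff]
          simp only [Cardinal.lift_id] at hScard
          rw [hScard]
          exact Cardinal.aleph0_ne_zero
        set ab : Fin B → S := fun i => ⟨abar i, hsS (Set.mem_range_self i)⟩ with hab
        refine ⟨S, inferInstance, hScnt, hSne, ab, ?_, ?_⟩
        · rw [S.realize_sentence φ]
          exact hVstarphi
        · intro p hp
          have htr := (S.subtype.map_formula p.exf ab)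
          have hcoe : (S.subtype ∘ ab) = abar := by
            funext i
            rfl
          rw [hcoe] at htr
          rw [← Pk.realize_exf] at hp
          have h2 : p.exf.Realize abar := htr.2 hp
          rw [Pk.realize_exf] at h2
          by_contra hc
          exact hVstarF p hc h2
    obtain ⟨V, sV, hVcnt, hVne, ab, hVφ, hVincl⟩ := hmain
    letI := sV
    haveI := hVcnt
    haveI := hVne
    obtain ⟨g, hgab, hginj, hgrel⟩ := embed_into_upow ab cbar hVincl
    -- the image substructure contains the core
    have hCrange : (C : Set (Upow M)) ⊆ (rangeSub g : Set (Upow M)) := by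
      intro x hx
      obtain ⟨i, hi⟩ := hCsub hx
      exact ⟨ab i, by rw [hgab, hi]⟩
    have hSne' : Nonempty ↥(rangeSub g) := ⟨⟨g (Classical.arbitrary V), ⟨_, rfl⟩⟩⟩
    have hmodel : ↥(rangeSub g) ⊨ φ := hCcore (rangeSub g) hCrange hSne'
    rw [realize_range_iso g hginj hgrel φ] at hmodel
    exact hVφ hmodel

end Cover
section Assembly

/-- Global equivalence: a `PSC(B)` sentence is equivalent (over all nonempty structures)
to a single Σ₂ sentence with `B` existential quantifiers. -/
theorem global_equiv {B : ℕ} {φ : Language.graph.Sentence} (h : PSC φ B) :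
    ∃ u : Pk B, ∀ (M : Type) [Language.graph.Structure M] [Nonempty M],
      M ⊨ φ ↔ M ⊨ u.sigma := by
  classical
  set S : Set (Pk B) := {u : Pk B | ∀ G : GM, G.Sat u.sigma → G.Sat φ} with hS
  set T : Language.graph.Theory :=
    insert φ {s | ∃ u ∈ S, s = (u.sigma).not} with hT
  have hTunsat : ¬ T.IsSatisfiable := by
    rintro ⟨N⟩
    haveI := N.nonempty'
    have hNφ : N ⊨ φ := N.is_model.realize_of_mem φ (by rw [hT]; exact Set.mem_insert _ _)
    obtain ⟨u, hNu, huS⟩ := cover h N hNφ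
    have hmem : (u.sigma).not ∈ T := by
      rw [hT]
      exact Set.mem_insert_of_mem _ ⟨u, huS, rfl⟩
    have := N.is_model.realize_of_mem _ hmem
    rw [Sentence.realize_not] at this
    exact this hNu
  have hTfin : ¬ T.IsFinitelySatisfiable := by
    intro hfin
    exact hTunsat (Theory.isSatisfiable_iff_isFinitelySatisfiable.2 hfin)
  rw [Theory.IsFinitelySatisfiable] at hTfin
  push_neg at hTfin
  obtain ⟨T0, hT0sub, hT0unsat⟩ := hTfin
  -- extract the packages appearing in T0
  set L0 : List (Pk B) := T0.toList.filterMap (fun s =>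
    if hx : ∃ u : Pk B, u ∈ S ∧ s = (u.sigma).not then some hx.choose else none) with hL0
  have hL0S : ∀ u ∈ L0, u ∈ S := by
    intro u hu
    rw [hL0] at hu
    obtain ⟨s, _, hs2⟩ := List.mem_filterMap.1 hu
    by_cases hx : ∃ u' : Pk B, u' ∈ S ∧ s = (u'.sigma).not
    · rw [dif_pos hx] at hs2
      obtain rfl := Option.some_injective _ hs2
      exact hx.choose_spec.1
    · rw [dif_neg hx] at hs2
      exact absurd hs2 (by simp)
  have hkey : ∀ (M : Type) [Language.graph.Structure M] [Nonempty M],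
      M ⊨ φ → ∃ u ∈ L0, M ⊨ u.sigma := by
    intro M _ _ hMφ
    by_contra hc
    push_neg at hc
    have hmodel : M ⊨ (↑T0 : Language.graph.Theory) := by
      rw [Theory.model_iff]
      intro ψ hψ
      have hψT : ψ ∈ T := hT0sub hψ
      rw [hT] at hψT
      rcases Set.mem_insert_iff.1 hψT with rfl | hψ2
      · exact hMφ
      · obtain ⟨u, huS, rfl⟩ := hψ2
        rw [Sentence.realize_not]
        intro hMu
        have hx : ∃ u' : Pk B, u' ∈ S ∧ (u.sigma).not = (u'.sigma).not := ⟨u, huS, rfl⟩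
        have hmemL0 : hx.choose ∈ L0 := by
          rw [hL0]
          refine List.mem_filterMap.2 ⟨(u.sigma).not, Finset.mem_toList.2 hψ, ?_⟩
          rw [dif_pos hx]
        have hsame : (u.sigma).not = (hx.choose.sigma).not := hx.choose_spec.2
        have hMu' : M ⊨ hx.choose.sigma := by
          have h1 : u.sigma = hx.choose.sigma := by
            have h2 := hsame
            unfold BoundedFormula.not at h2
            injection h2
          rw [← h1]
          exact hMu
        exact hc hx.choose hmemL0 hMu'
    haveI := hmodel
    exact hT0unsat (Theory.Model.isSatisfiable M)
  refine ⟨Pk.bigOr L0, ?_⟩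
  intro M _ _
  constructor
  · intro hMφ
    obtain ⟨u, huL0, hMu⟩ := hkey M hMφ
    rw [Pk.realize_sigma] at hMu ⊢
    obtain ⟨xs, hxs⟩ := hMu
    exact ⟨xs, (Pk.evalA_bigOr L0 xs).2 ⟨u, huL0, hxs⟩⟩
  · intro hMσ
    rw [Pk.realize_sigma] at hMσ
    obtain ⟨xs, hxs⟩ := hMσ
    obtain ⟨u, huL0, hu⟩ := (Pk.evalA_bigOr L0 xs).1 hxs
    have huS := hL0S u huL0
    have hMu : M ⊨ u.sigma := (Pk.realize_sigma u).2 ⟨xs, hu⟩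
    exact huS ⟨M, inferInstance, inferInstance⟩ hMu

end Assembly

/-- Over the class 𝒞 of disjoint unions of oriented paths: for every `B ∈ ℕ`, an FO sentence
`φ` with `φ ∈ PSC(B)` is equivalent over 𝒞 to a sentence of the form `∃x₁…x_B ∀y₁…y_n β`
with `β` quantifier-free. -/
theorem statement14 (B : ℕ) (φ : Language.graph.Sentence) (h : PSC φ B) :
    ∃ (n : ℕ) (β : Language.graph.BoundedFormula Empty (B + n)), β.IsQF ∧
      ∀ (M : Type) [Language.graph.Structure M] [Nonempty M], InDirPaths M →
        (M ⊨ φ ↔ M ⊨ sigma2 B n β) := by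
  obtain ⟨u, hu⟩ := global_equiv h
  exact ⟨u.n, Pk.toBF u.f, Pk.isQF_toBF u.qf, fun M _ _ _ => hu M⟩

end Stmt
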